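/- For the bivariate Gumbel copula with δ>1 and fixed α ∈ (0,1), with standard normal margins, F_{Y|X}^{-1}(α|x) ~ -(-2δ log α)^{1/(2δ)} |x|^{1-1/δ} as x → -∞; i.e., the lower-tail conditional quantile is sublinear with exponent η = 1 - 1/δ ∈ (0,1). -/

import Mathlib

open Real Set Filter Topology

open MeasureTheory Asymptotics

/-- The standard normal CDF `Φ`. -/
noncomputable def stdNormalCDF (x : ℝ) : ℝ :=
  (∫ t in Set.Iic x, Real.exp (-t ^ 2 / 2)) / Real.sqrt (2 * Real.pi)

lemma gauss_eq : (fun t : ℝ => Real.exp (-t ^ 2 / 2)) = fun t => Real.exp (-(1/2) * t ^ 2) := by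
  funext t; congr 1; ring

lemma gauss_int : MeasureTheory.Integrable (fun t : ℝ => Real.exp (-t ^ 2 / 2)) := by
  rw [gauss_eq]; exact integrable_exp_neg_mul_sq (by norm_num)

lemma sq_tendsto_atBot : Tendsto (fun t : ℝ => t ^ 2) atBot atTop := by
  have h : Tendsto (fun t : ℝ => -t) atBot atTop := tendsto_neg_atBot_atTop
  have h2 : (fun t : ℝ => t ^ 2) = fun t : ℝ => (-t) * (-t) := by funext t; ring
  rw [h2]; exact h.atTop_mul_atTop₀ h

lemma gauss_sq_tendsto : Tendsto (fun t : ℝ => -t ^ 2 / 2) atBot atBot := by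
  have h1 := sq_tendsto_atBot.atTop_div_const (by norm_num : (0:ℝ) < 2)
  have h3 : (fun t : ℝ => -t ^ 2 / 2) = fun t : ℝ => -(t ^ 2 / 2) := by funext t; ring
  rw [h3]; exact tendsto_neg_atTop_atBot.comp h1

lemma gauss_tendsto_zero : Tendsto (fun t : ℝ => Real.exp (-t ^ 2 / 2)) atBot (𝓝 0) :=
  Real.tendsto_exp_atBot.comp gauss_sq_tendsto

lemma gauss_deriv (t : ℝ) : HasDerivAt (fun s : ℝ => Real.exp (-s ^ 2 / 2)) (-t * Real.exp (-t ^ 2 / 2)) t := by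
  have h1 : HasDerivAt (fun s : ℝ => -s ^ 2 / 2) (-t) t := by
    have := ((hasDerivAt_pow 2 t).neg).div_const 2
    exact this.congr_deriv (by push_cast; ring)
  have := (Real.hasDerivAt_exp (-t ^ 2 / 2)).comp t h1
  exact this.congr_deriv (by ring)

lemma tmul_int {x : ℝ} (hx : x ≠ 0) :
    IntegrableOn (fun t : ℝ => (t / x) * Real.exp (-t ^ 2 / 2)) (Set.Iic x) := by
  have h1 : MeasureTheory.Integrable (fun t : ℝ => t * Real.exp (-t ^ 2 / 2)) := by
    have h0 := integrable_mul_exp_neg_mul_sq (by norm_num : (0:ℝ) < 1/2)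
    have : (fun t : ℝ => t * Real.exp (-t ^ 2 / 2)) = fun t : ℝ => t * Real.exp (-(1/2) * t ^ 2) := by
      funext t; congr 2; ring
    rw [this]; exact h0
  have h2 : (fun t : ℝ => (t / x) * Real.exp (-t ^ 2 / 2))
      = fun t : ℝ => x⁻¹ * (t * Real.exp (-t ^ 2 / 2)) := by funext t; field_simp
  rw [h2]; exact (h1.const_mul _).integrableOn

/-- Upper Mills bound -/
lemma gauss_upper {x : ℝ} (hx : x < 0) :
    (∫ t in Set.Iic x, Real.exp (-t ^ 2 / 2)) ≤ Real.exp (-x ^ 2 / 2) / (-x) := by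
  have hxne : x ≠ 0 := ne_of_lt hx
  have key : ∫ t in Set.Iic x, (t / x) * Real.exp (-t ^ 2 / 2) = Real.exp (-x ^ 2 / 2) / (-x) := by
    have hder : ∀ t ∈ Set.Iic x, HasDerivAt (fun s : ℝ => -Real.exp (-s ^ 2 / 2) / x)
        ((t / x) * Real.exp (-t ^ 2 / 2)) t := by
      intro t _
      have := ((gauss_deriv t).neg).div_const x
      exact this.congr_deriv (by ring)
    have htend : Tendsto (fun s : ℝ => -Real.exp (-s ^ 2 / 2) / x) atBot (𝓝 0) := by
      have := (gauss_tendsto_zero.neg).div_const x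
      simpa using this
    have := integral_Iic_of_hasDerivAt_of_tendsto' hder (tmul_int hxne) htend
    rw [this, sub_zero, div_neg, neg_div]
  rw [← key]
  refine setIntegral_mono_on gauss_int.integrableOn (tmul_int hxne) measurableSet_Iic ?_
  intro t ht
  have h1 : (1:ℝ) ≤ t / x := by
    rw [le_div_iff_of_neg hx]; simpa using ht
  nlinarith [Real.exp_pos (-t ^ 2 / 2)]

/-- Lower Mills bound -/
lemma gauss_lower {x : ℝ} (hx : x < 0) :
    (-x / (1 + x ^ 2)) * Real.exp (-x ^ 2 / 2) ≤ ∫ t in Set.Iic x, Real.exp (-t ^ 2 / 2) := by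
  set f : ℝ → ℝ := fun t => (-t / (1 + t ^ 2)) * Real.exp (-t ^ 2 / 2) with hf
  set f' : ℝ → ℝ := fun t => ((t ^ 2 - 1) / (1 + t ^ 2) ^ 2 + t ^ 2 / (1 + t ^ 2)) * Real.exp (-t ^ 2 / 2) with hf'
  have hden : ∀ t : ℝ, (0:ℝ) < 1 + t ^ 2 := fun t => by positivity
  have hder : ∀ t ∈ Set.Iic x, HasDerivAt f (f' t) t := by
    intro t _
    have hg : HasDerivAt (fun s : ℝ => -s / (1 + s ^ 2)) ((t ^ 2 - 1) / (1 + t ^ 2) ^ 2) t := by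
      have h1 : HasDerivAt (fun s : ℝ => -s) (-1) t := (hasDerivAt_id t).neg
      have h2 : HasDerivAt (fun s : ℝ => 1 + s ^ 2) (0 + 2 * t) t := by
        exact ((hasDerivAt_pow 2 t).const_add 1).congr_deriv (by push_cast; ring)
      have := h1.div h2 (ne_of_gt (hden t))
      exact this.congr_deriv (by ring)
    have := hg.mul (gauss_deriv t)
    exact this.congr_deriv (by simp only [hf']; ring)
  have hbound : ∀ t : ℝ, |(t ^ 2 - 1) / (1 + t ^ 2) ^ 2 + t ^ 2 / (1 + t ^ 2)| ≤ 1 := by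
    intro t
    rw [abs_le]
    constructor
    · rw [div_add_div _ _ (by positivity) (ne_of_gt (hden t)), le_div_iff₀ (by positivity)]
      nlinarith [sq_nonneg t, sq_nonneg (t^2)]
    · rw [div_add_div _ _ (by positivity) (ne_of_gt (hden t)), div_le_iff₀ (by positivity)]
      nlinarith [sq_nonneg t, sq_nonneg (t^2)]
  have hint : IntegrableOn f' (Set.Iic x) := by
    refine (gauss_int.mono ?_ ?_).integrableOn
    · apply Continuous.aestronglyMeasurable
      apply Continuous.mul _ (by continuity)
      apply Continuous.add
      · exact (continuous_sub_right 1 |>.comp (continuous_pow 2)).div (by continuity) (fun t => by positivity)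
      · exact (continuous_pow 2).div (by continuity) (fun t => ne_of_gt (hden t))
    · filter_upwards with t
      simp only [hf', Real.norm_eq_abs, abs_mul, Real.abs_exp]
      exact mul_le_of_le_one_left (Real.exp_pos _).le (hbound t)
  have htend : Tendsto f atBot (𝓝 0) := by
    refine squeeze_zero_norm (fun t => ?_) gauss_tendsto_zero
    simp only [hf, Real.norm_eq_abs, abs_mul, Real.abs_exp]
    apply mul_le_of_le_one_left (Real.exp_pos _).le
    rw [abs_div, abs_of_pos (hden t), div_le_one (hden t), abs_neg]
    nlinarith [abs_nonneg t, sq_abs t]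
  have heq := integral_Iic_of_hasDerivAt_of_tendsto' hder hint htend
  rw [sub_zero] at heq
  show f x ≤ _
  rw [← heq]
  refine setIntegral_mono_on hint gauss_int.integrableOn measurableSet_Iic ?_
  intro t _
  have := hbound t
  rw [abs_le] at this
  simp only [hf']
  nlinarith [Real.exp_pos (-t ^ 2 / 2)]

open Asymptotics

lemma sqrt2pi_pos : 0 < Real.sqrt (2 * Real.pi) := Real.sqrt_pos.2 (by positivity)

lemma N_pos (x : ℝ) : 0 < ∫ t in Set.Iic x, Real.exp (-t ^ 2 / 2) := by
  refine (setIntegral_pos_iff_support_of_nonneg_ae ?_ gauss_int.integrableOn).2 ?_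
  · exact ae_of_all _ fun t => (Real.exp_pos _).le
  · have hs : Function.support (fun t : ℝ => Real.exp (-t ^ 2 / 2)) = Set.univ := by
      ext t; simp [Function.support, (Real.exp_pos (-t ^ 2 / 2)).ne']
    rw [hs, Set.univ_inter, Real.volume_Iic]
    simp

lemma Phi_pos (x : ℝ) : 0 < stdNormalCDF x := div_pos (N_pos x) sqrt2pi_pos

lemma Phi_mono : Monotone stdNormalCDF := by
  intro x y h
  unfold stdNormalCDF
  apply div_le_div_of_nonneg_right _ sqrt2pi_pos.le
  exact setIntegral_mono_set gauss_int.integrableOn (ae_of_all _ fun t => (Real.exp_pos _).le)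
    (HasSubset.Subset.eventuallyLE (Iic_subset_Iic.2 h))

lemma Phi_lt_one {x : ℝ} (hx : x ≤ -1) : stdNormalCDF x < 1 := by
  have hx0 : x < 0 := lt_of_le_of_lt hx (by norm_num)
  have h1 : (∫ t in Set.Iic x, Real.exp (-t ^ 2 / 2)) ≤ 1 := by
    refine (gauss_upper hx0).trans ?_
    have h2 : Real.exp (-x ^ 2 / 2) ≤ 1 := Real.exp_le_one_iff.2 (by nlinarith)
    have h3 : (1:ℝ) ≤ -x := by linarith
    calc Real.exp (-x ^ 2 / 2) / (-x) ≤ 1 / 1 := by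
          apply div_le_div₀ (by norm_num) h2 (by norm_num) h3
      _ = 1 := by norm_num
  have h4 : (1:ℝ) < Real.sqrt (2 * Real.pi) := by
    rw [show (1:ℝ) = Real.sqrt 1 by simp]
    exact Real.sqrt_lt_sqrt (by norm_num) (by nlinarith [Real.pi_gt_three])
  unfold stdNormalCDF
  rw [div_lt_one sqrt2pi_pos]
  linarith

lemma Phi_mem : ∀ᶠ x in atBot, stdNormalCDF x ∈ Set.Ioo (0:ℝ) 1 := by
  filter_upwards [eventually_le_atBot (-1 : ℝ)] with x hx
  exact ⟨Phi_pos x, Phi_lt_one hx⟩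

lemma Phi_tendsto_zero : Tendsto stdNormalCDF atBot (𝓝 0) := by
  have h0 := gauss_tendsto_zero.div_const (Real.sqrt (2 * Real.pi))
  rw [zero_div] at h0
  refine tendsto_of_tendsto_of_tendsto_of_le_of_le' tendsto_const_nhds h0 ?_ ?_
  · exact Eventually.of_forall fun x => (Phi_pos x).le
  · filter_upwards [eventually_le_atBot (-1 : ℝ)] with x hx
    have hx0 : x < 0 := lt_of_le_of_lt hx (by norm_num)
    unfold stdNormalCDF
    apply div_le_div_of_nonneg_right _ sqrt2pi_pos.le
    refine (gauss_upper hx0).trans ?_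
    rw [div_le_iff₀ (by linarith)]
    nlinarith [Real.exp_pos (-x ^ 2 / 2)]

lemma halfsq_tendsto : Tendsto (fun x : ℝ => x ^ 2 / 2) atBot atTop :=
  sq_tendsto_atBot.atTop_div_const (by norm_num)

lemma log_div_halfsq {g : ℝ → ℝ} (hg : Tendsto g atBot atTop)
    (hO : g =O[atBot] fun x : ℝ => x ^ 2 / 2) :
    Tendsto (fun x => Real.log (g x) / (x ^ 2 / 2)) atBot (𝓝 0) :=
  ((Real.isLittleO_log_id_atTop.comp_tendsto hg).trans_isBigO hO).tendsto_div_nhds_zero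

lemma t1 : Tendsto (fun x : ℝ => Real.log (-x) / (x ^ 2 / 2)) atBot (𝓝 0) := by
  refine log_div_halfsq tendsto_neg_atBot_atTop ?_
  rw [isBigO_iff]
  refine ⟨1, ?_⟩
  filter_upwards [eventually_le_atBot (-2 : ℝ)] with x hx
  rw [Real.norm_eq_abs, Real.norm_eq_abs, one_mul, abs_of_pos (by linarith : (0:ℝ) < -x),
    abs_of_pos (by nlinarith : (0:ℝ) < x ^ 2 / 2)]
  nlinarith

lemma t2 : Tendsto (fun x : ℝ => Real.log (1 + x ^ 2) / (x ^ 2 / 2)) atBot (𝓝 0) := by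
  refine log_div_halfsq (tendsto_atTop_add_const_left _ 1 sq_tendsto_atBot) ?_
  rw [isBigO_iff]
  refine ⟨4, ?_⟩
  filter_upwards [eventually_le_atBot (-1 : ℝ)] with x hx
  rw [Real.norm_eq_abs, Real.norm_eq_abs, abs_of_pos (by positivity : (0:ℝ) < 1 + x ^ 2),
    abs_of_pos (by nlinarith : (0:ℝ) < x ^ 2 / 2)]
  nlinarith

lemma t3 (C : ℝ) : Tendsto (fun x : ℝ => C / (x ^ 2 / 2)) atBot (𝓝 0) :=
  tendsto_const_nhds.div_atTop halfsq_tendsto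

/-- Key asymptotic: `-log Φ(x) ~ x²/2` as `x → -∞`. -/
lemma neg_log_Phi : Tendsto (fun x : ℝ => -Real.log (stdNormalCDF x) / (x ^ 2 / 2)) atBot (𝓝 1) := by
  set C := Real.log (Real.sqrt (2 * Real.pi)) with hC
  have hlog : ∀ x : ℝ, -Real.log (stdNormalCDF x)
      = -Real.log (∫ t in Set.Iic x, Real.exp (-t ^ 2 / 2)) + C := by
    intro x
    unfold stdNormalCDF
    rw [Real.log_div (N_pos x).ne' sqrt2pi_pos.ne']
    ring
  have hlo : Tendsto (fun x : ℝ => (x ^ 2 / 2 + Real.log (-x) + C) / (x ^ 2 / 2)) atBot (𝓝 1) := by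
    have h : Tendsto (fun x : ℝ => 1 + (Real.log (-x) / (x ^ 2 / 2) + C / (x ^ 2 / 2))) atBot (𝓝 1) := by
      simpa using ((t1.add (t3 C)).const_add 1)
    refine h.congr' ?_
    filter_upwards [eventually_le_atBot (-1 : ℝ)] with x hx
    have hp : x ^ 2 / 2 ≠ 0 := by nlinarith
    have hxne : x ≠ 0 := by intro h; rw [h] at hp; norm_num at hp
    field_simp
    ring
  have hhi : Tendsto (fun x : ℝ => (x ^ 2 / 2 + (Real.log (1 + x ^ 2) - Real.log (-x)) + C) / (x ^ 2 / 2)) atBot (𝓝 1) := by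
    have h : Tendsto (fun x : ℝ => 1 + ((Real.log (1 + x ^ 2) / (x ^ 2 / 2) - Real.log (-x) / (x ^ 2 / 2)) + C / (x ^ 2 / 2))) atBot (𝓝 1) := by
      simpa using (((t2.sub t1).add (t3 C)).const_add 1)
    refine h.congr' ?_
    filter_upwards [eventually_le_atBot (-1 : ℝ)] with x hx
    have hp : x ^ 2 / 2 ≠ 0 := by nlinarith
    have hxne : x ≠ 0 := by intro h; rw [h] at hp; norm_num at hp
    field_simp
    ring
  refine tendsto_of_tendsto_of_tendsto_of_le_of_le' hlo hhi ?_ ?_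
  · filter_upwards [eventually_le_atBot (-1 : ℝ)] with x hx
    have hx0 : x < 0 := lt_of_le_of_lt hx (by norm_num)
    have hp : (0:ℝ) < x ^ 2 / 2 := by nlinarith
    rw [hlog]
    gcongr
    have h1 : Real.log (∫ t in Set.Iic x, Real.exp (-t ^ 2 / 2))
        ≤ Real.log (Real.exp (-x ^ 2 / 2) / (-x)) :=
      Real.log_le_log (N_pos x) (gauss_upper hx0)
    rw [Real.log_div (Real.exp_pos _).ne' (by linarith : -x ≠ 0), Real.log_exp] at h1
    linarith
  · filter_upwards [eventually_le_atBot (-1 : ℝ)] with x hx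
    have hx0 : x < 0 := lt_of_le_of_lt hx (by norm_num)
    have hp : (0:ℝ) < x ^ 2 / 2 := by nlinarith
    rw [hlog]
    gcongr
    have hnx : (0:ℝ) < -x := by linarith
    have hlpos : (0:ℝ) < -x / (1 + x ^ 2) * Real.exp (-x ^ 2 / 2) :=
      mul_pos (div_pos hnx (by positivity)) (Real.exp_pos _)
    have h1 : Real.log (-x / (1 + x ^ 2) * Real.exp (-x ^ 2 / 2))
        ≤ Real.log (∫ t in Set.Iic x, Real.exp (-t ^ 2 / 2)) :=
      Real.log_le_log hlpos (gauss_lower hx0)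
    rw [Real.log_mul (ne_of_gt (div_pos hnx (by positivity))) (Real.exp_pos _).ne', Real.log_exp,
      Real.log_div hnx.ne' (by positivity : (1:ℝ) + x ^ 2 ≠ 0)] at h1
    linarith

/-- Pointwise log-form of the Gumbel conditional-quantile equation. -/
lemma copula_log {δ α u v : ℝ} (hδ : 1 < δ) (hα0 : 0 < α) (hu : u ∈ Set.Ioo (0:ℝ) 1)
    (hv : v ∈ Set.Ioo (0:ℝ) 1)
    (h : u⁻¹ * Real.exp (-(((-Real.log u) ^ δ + (-Real.log v) ^ δ) ^ (1 / δ))) *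
        (1 + ((-Real.log v) / (-Real.log u)) ^ δ) ^ (1 / δ - 1) = α) :
    (-Real.log u) * ((1 + ((-Real.log v) / (-Real.log u)) ^ δ) ^ (1/δ) - 1)
      + (1 - 1/δ) * Real.log (1 + ((-Real.log v) / (-Real.log u)) ^ δ) = -Real.log α := by
  have hδ0 : (0:ℝ) < δ := by linarith
  have hδne : δ ≠ 0 := hδ0.ne'
  set a := -Real.log u with haa
  set b := -Real.log v with hbb
  have ha : 0 < a := by
    simp only [haa, neg_pos]
    exact Real.log_neg hu.1 hu.2
  have hb : 0 < b := by
    simp only [hbb, neg_pos]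
    exact Real.log_neg hv.1 hv.2
  set t := (b / a) ^ δ with htt
  have ht : 0 < t := Real.rpow_pos_of_pos (div_pos hb ha) δ
  have h1t : (0:ℝ) < 1 + t := by linarith
  have key : (a ^ δ + b ^ δ) ^ (1/δ) = a * (1 + t) ^ (1/δ) := by
    have h1 : a ^ δ + b ^ δ = a ^ δ * (1 + t) := by
      rw [htt, Real.div_rpow hb.le ha.le, mul_add, mul_one,
        mul_div_cancel₀ _ (Real.rpow_pos_of_pos ha δ).ne']
    rw [h1, Real.mul_rpow (Real.rpow_nonneg ha.le δ) h1t.le, ← Real.rpow_mul ha.le,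
      mul_one_div_cancel hδne, Real.rpow_one]
  have hlog : Real.log α = a - a * (1 + t) ^ (1/δ) + (1/δ - 1) * Real.log (1 + t) := by
    rw [← h]
    rw [Real.log_mul (mul_ne_zero (inv_ne_zero hu.1.ne') (Real.exp_ne_zero _))
      (Real.rpow_pos_of_pos h1t _).ne', Real.log_mul (inv_ne_zero hu.1.ne') (Real.exp_ne_zero _),
      Real.log_inv, Real.log_exp, Real.log_rpow h1t, key]
    simp only [haa]
    ring
  linarith

/-- Asymptotic solution of the Gumbel equation along a filter. -/
lemma copula_asym {δ L : ℝ} (hδ : 1 < δ) (hL : 0 < L) {ι : Type*} {l : Filter ι} [l.NeBot]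
    {a b : ι → ℝ}
    (ha : ∀ᶠ i in l, 0 < a i) (hb : ∀ᶠ i in l, 0 < b i)
    (hE : ∀ᶠ i in l, a i * ((1 + (b i / a i) ^ δ) ^ (1/δ) - 1)
      + (1 - 1/δ) * Real.log (1 + (b i / a i) ^ δ) = L)
    (hatop : Tendsto a l atTop) :
    Tendsto (fun i => b i / ((δ * L) ^ (1/δ) * (a i) ^ (1 - 1/δ))) l (𝓝 1) := by
  have hδ0 : (0:ℝ) < δ := by linarith
  have hδne : δ ≠ 0 := hδ0.ne'
  have hη : (0:ℝ) < 1 - 1/δ := by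
    have : 1/δ < 1 := by rw [div_lt_one hδ0]; exact hδ
    linarith
  have h1δ : (0:ℝ) < 1/δ := by positivity
  set T : ι → ℝ := fun i => (b i / a i) ^ δ with hTT
  have hT : ∀ᶠ i in l, 0 < T i := by
    filter_upwards [ha, hb] with i hai hbi
    exact Real.rpow_pos_of_pos (div_pos hbi hai) δ
  -- rpow of (1+T) exceeds one
  have hgt1 : ∀ᶠ i in l, 1 < (1 + T i) ^ (1/δ) := by
    filter_upwards [hT] with i hTi
    calc (1:ℝ) = 1 ^ (1/δ) := (Real.one_rpow _).symm
      _ < (1 + T i) ^ (1/δ) := Real.rpow_lt_rpow (by norm_num) (by linarith) h1δ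
  -- T → 0
  have hT0 : Tendsto T l (𝓝 0) := by
    have hub : ∀ᶠ i in l, T i ≤ (1 + L / a i) ^ δ - 1 := by
      filter_upwards [ha, hT, hE, hgt1, hatop.eventually_gt_atTop 0] with i hai hTi hEi hgt hpos
      have hlog0 : 0 ≤ Real.log (1 + T i) := Real.log_nonneg (by linarith)
      have h1 : a i * ((1 + T i) ^ (1/δ) - 1) ≤ L := by nlinarith
      have h2 : (1 + T i) ^ (1/δ) ≤ 1 + L / a i := by
        rw [← sub_le_iff_le_add']
        rw [mul_comm] at h1
        exact (le_div_iff₀ hai).2 h1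
      have h3 : ((1 + T i) ^ (1/δ)) ^ δ ≤ (1 + L / a i) ^ δ :=
        Real.rpow_le_rpow (by positivity) h2 hδ0.le
      rw [← Real.rpow_mul (by linarith : (0:ℝ) ≤ 1 + T i), one_div_mul_cancel hδne,
        Real.rpow_one] at h3
      linarith
    have hup : Tendsto (fun i => (1 + L / a i) ^ δ - 1) l (𝓝 0) := by
      have h1 : Tendsto (fun i => 1 + L / a i) l (𝓝 1) := by
        have : Tendsto (fun i => L / a i) l (𝓝 0) := tendsto_const_nhds.div_atTop hatop
        simpa using (this.const_add 1)
      have h2 : ContinuousAt (fun y : ℝ => y ^ δ) 1 :=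
        Real.continuousAt_rpow_const 1 δ (Or.inl one_ne_zero)
      have h3 := (h2.tendsto.comp h1).sub_const 1
      simpa using h3
    refine tendsto_of_tendsto_of_tendsto_of_le_of_le' tendsto_const_nhds hup ?_ hub
    filter_upwards [hT] with i hTi; exact hTi.le
  have h1T : Tendsto (fun i => 1 + T i) l (𝓝 1) := by
    simpa using (hT0.const_add 1)
  have hlog1T : Tendsto (fun i => Real.log (1 + T i)) l (𝓝 0) := by
    have := (Real.continuousAt_log one_ne_zero).tendsto.comp h1T
    simpa [Function.comp_def] using this
  -- slope: T / ((1+T)^{1/δ} - 1) → δ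
  have hslope : Tendsto (fun i => T i / ((1 + T i) ^ (1/δ) - 1)) l (𝓝 δ) := by
    have hd : HasDerivAt (fun y : ℝ => y ^ (1/δ)) (1/δ) 1 := by
      have := Real.hasDerivAt_rpow_const (x := 1) (p := 1/δ) (Or.inl one_ne_zero)
      simpa using this
    have hsl := hasDerivAt_iff_tendsto_slope.mp hd
    have hcomp : Tendsto (fun i => 1 + T i) l (𝓝[≠] 1) := by
      rw [tendsto_nhdsWithin_iff]
      refine ⟨h1T, ?_⟩
      filter_upwards [hT] with i hTi
      simp only [Set.mem_compl_iff, Set.mem_singleton_iff]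
      intro h; linarith [h]
    have h2 := hsl.comp hcomp
    have h3 : (fun i => slope (fun y : ℝ => y ^ (1/δ)) 1 (1 + T i))
        = fun i => ((1 + T i) ^ (1/δ) - 1) / T i := by
      funext i
      rw [slope_def_field]
      simp [Real.one_rpow]
    have h2' : Tendsto (fun i => ((1 + T i) ^ (1/δ) - 1) / T i) l (𝓝 (1/δ)) := by
      rw [← h3]; exact h2
    have h4 := h2'.inv₀ (by positivity : (1:ℝ)/δ ≠ 0)
    have h4' : Tendsto (fun i => T i / ((1 + T i) ^ (1/δ) - 1)) l (𝓝 ((1/δ)⁻¹)) := by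
      refine h4.congr fun i => ?_
      rw [inv_div]
    have hinv : ((1:ℝ)/δ)⁻¹ = δ := by field_simp
    rwa [hinv] at h4'
  -- a * T → δ L
  have hAT : Tendsto (fun i => a i * T i) l (𝓝 (δ * L)) := by
    have hX : Tendsto (fun i => a i * ((1 + T i) ^ (1/δ) - 1)) l (𝓝 L) := by
      have h1 : Tendsto (fun i => L - (1 - 1/δ) * Real.log (1 + T i)) l (𝓝 L) := by
        have := (hlog1T.const_mul (1 - 1/δ)).const_sub L
        simpa using this
      refine h1.congr' ?_
      filter_upwards [hE] with i hEi
      linarith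
    have h2 := hX.mul hslope
    rw [show L * δ = δ * L by ring] at h2
    refine h2.congr' ?_
    filter_upwards [hgt1, hT] with i hgt hTi
    have hne : (1 + T i) ^ (1/δ) - 1 ≠ 0 := by linarith
    field_simp
  -- final: b / ((δL)^{1/δ} a^{1-1/δ}) = (aT/(δL))^{1/δ} → 1
  have hkey : ∀ᶠ i in l, b i / ((δ * L) ^ (1/δ) * (a i) ^ (1 - 1/δ))
      = (a i * T i / (δ * L)) ^ (1/δ) := by
    filter_upwards [ha, hb] with i hai hbi
    have hdL : (0:ℝ) < δ * L := by positivity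
    have hlhs : (0:ℝ) < b i / ((δ * L) ^ (1/δ) * (a i) ^ (1 - 1/δ)) := by
      apply div_pos hbi
      exact mul_pos (Real.rpow_pos_of_pos hdL _) (Real.rpow_pos_of_pos hai _)
    have hTi : 0 < T i := Real.rpow_pos_of_pos (div_pos hbi hai) δ
    have hrhs : (0:ℝ) < (a i * T i / (δ * L)) ^ (1/δ) :=
      Real.rpow_pos_of_pos (by positivity) _
    apply Real.log_injOn_pos (Set.mem_Ioi.2 hlhs) (Set.mem_Ioi.2 hrhs)
    rw [Real.log_div hbi.ne' (by positivity), Real.log_mul (Real.rpow_pos_of_pos hdL _).ne'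
      (Real.rpow_pos_of_pos hai _).ne', Real.log_rpow hdL, Real.log_rpow hai,
      Real.log_rpow (by positivity : (0:ℝ) < a i * T i / (δ * L)),
      Real.log_div (by positivity : (a i * T i) ≠ 0) hdL.ne',
      Real.log_mul hai.ne' hTi.ne', hTT, Real.log_rpow (div_pos hbi hai),
      Real.log_div hbi.ne' hai.ne']
    field_simp
    ring
  have h5 : Tendsto (fun i => a i * T i / (δ * L)) l (𝓝 1) := by
    have := hAT.div_const (δ * L)
    rwa [div_self (by positivity : (δ*L) ≠ 0)] at this
  have h6 : ContinuousAt (fun y : ℝ => y ^ (1/δ)) 1 :=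
    Real.continuousAt_rpow_const 1 _ (Or.inl one_ne_zero)
  have h7 := h6.tendsto.comp h5
  rw [Real.one_rpow] at h7
  exact Tendsto.congr' (hkey.mono fun i h => h.symm) h7

/-- Constant identity used at the end. -/
lemma const_identity {δ L x : ℝ} (hδ : 1 < δ) (hL : 0 < L) (hx : x ≠ 0) :
    ((2 * δ * L) ^ (1 / (2 * δ)) * |x| ^ (1 - 1/δ)) ^ 2
      = 2 * (δ * L) ^ (1/δ) * (x ^ 2 / 2) ^ (1 - 1/δ) := by
  have hδ0 : (0:ℝ) < δ := by linarith
  have hδne : δ ≠ 0 := hδ0.ne'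
  have habs : (0:ℝ) < |x| := abs_pos.2 hx
  have h2dL : (0:ℝ) < 2 * δ * L := by positivity
  have hdL : (0:ℝ) < δ * L := by positivity
  have hx2 : (0:ℝ) < x ^ 2 / 2 := by positivity
  have hLpos : (0:ℝ) < ((2 * δ * L) ^ (1 / (2 * δ)) * |x| ^ (1 - 1/δ)) ^ 2 := by
    have := mul_pos (Real.rpow_pos_of_pos h2dL (1 / (2 * δ))) (Real.rpow_pos_of_pos habs (1 - 1/δ))
    positivity
  have hRpos : (0:ℝ) < 2 * (δ * L) ^ (1/δ) * (x ^ 2 / 2) ^ (1 - 1/δ) := by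
    have := Real.rpow_pos_of_pos hdL (1/δ)
    have := Real.rpow_pos_of_pos hx2 (1 - 1/δ)
    positivity
  apply Real.log_injOn_pos (Set.mem_Ioi.2 hLpos) (Set.mem_Ioi.2 hRpos)
  rw [Real.log_pow,
    Real.log_mul (Real.rpow_pos_of_pos h2dL _).ne' (Real.rpow_pos_of_pos habs _).ne',
    Real.log_rpow h2dL, Real.log_rpow habs,
    Real.log_mul (by positivity : (2:ℝ) * (δ * L) ^ (1/δ) ≠ 0) (Real.rpow_pos_of_pos hx2 _).ne',
    Real.log_mul (by norm_num : (2:ℝ) ≠ 0) (Real.rpow_pos_of_pos hdL _).ne',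
    Real.log_rpow hdL, Real.log_rpow hx2,
    Real.log_div (by positivity : x ^ 2 ≠ 0) (by norm_num : (2:ℝ) ≠ 0),
    show (2:ℝ) * δ * L = 2 * (δ * L) by ring,
    Real.log_mul (by norm_num : (2:ℝ) ≠ 0) hdL.ne',
    show x ^ 2 = |x| ^ 2 from (sq_abs x).symm, Real.log_pow]
  push_cast
  field_simp
  ring

/-- For the bivariate Gumbel copula with `δ>1` and fixed `α ∈ (0,1)`, with standard normal
margins, the conditional quantile `Qy x = F_{Y|X}^{-1}(α|x) = Φ⁻¹(C_{V|U}^{-1}(α|Φ x))`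
satisfies `Qy x ~ -(-2δ log α)^{1/(2δ)} |x|^{1-1/δ}` as `x → -∞`: the lower-tail
conditional quantile is sublinear with exponent `η = 1 - 1/δ ∈ (0,1)`.  Here `q` is the
conditional quantile function of the Gumbel copula, i.e. the inverse in `v` of
`C_{V|U}(v|u) = u⁻¹ exp{-[(-log u)^δ+(-log v)^δ]^{1/δ}} [1+((-log v)/(-log u))^δ]^{1/δ-1}`,
and `Qy` is characterized by `Φ(Qy x) = q(Φ x)`. -/
theorem gumbel_normal_margins_lower_quantile (δ α : ℝ) (hδ : 1 < δ) (hα : α ∈ Ioo (0:ℝ) 1)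
    (q : ℝ → ℝ) (hq_mem : ∀ u ∈ Ioo (0:ℝ) 1, q u ∈ Ioo (0:ℝ) 1)
    (hq : ∀ u ∈ Ioo (0:ℝ) 1,
      u⁻¹ * Real.exp (-(((-Real.log u) ^ δ + (-Real.log (q u)) ^ δ) ^ (1 / δ))) *
        (1 + ((-Real.log (q u)) / (-Real.log u)) ^ δ) ^ (1 / δ - 1) = α)
    (Qy : ℝ → ℝ) (hQy : ∀ x : ℝ, stdNormalCDF (Qy x) = q (stdNormalCDF x)) :
    Tendsto (fun x : ℝ =>
        Qy x / (-((-2 * δ * Real.log α) ^ (1 / (2 * δ)) * |x| ^ (1 - 1 / δ))))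
      atBot (𝓝 1) := by
  have hδ0 : (0:ℝ) < δ := by linarith
  have hδne : δ ≠ 0 := hδ0.ne'
  have hη : (0:ℝ) < 1 - 1/δ := by
    have : 1/δ < 1 := by rw [div_lt_one hδ0]; exact hδ
    linarith
  have hL : (0:ℝ) < -Real.log α := by
    have := Real.log_neg hα.1 hα.2
    linarith
  set L : ℝ := -Real.log α with hLdef
  set A : ℝ → ℝ := fun x => -Real.log (stdNormalCDF x) with hAdef
  set B : ℝ → ℝ := fun x => -Real.log (q (stdNormalCDF x)) with hBdef
  have hBQy : ∀ x, B x = -Real.log (stdNormalCDF (Qy x)) := fun x => by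
    rw [hBdef, hQy x]
  -- eventual positivity
  have hApos : ∀ᶠ x in atBot, 0 < A x := by
    filter_upwards [Phi_mem] with x hx
    simp only [hAdef, neg_pos]
    exact Real.log_neg hx.1 hx.2
  have hBpos : ∀ᶠ x in atBot, 0 < B x := by
    filter_upwards [Phi_mem] with x hx
    have := hq_mem _ hx
    simp only [hBdef, neg_pos]
    exact Real.log_neg this.1 this.2
  -- the functional equation
  have hE : ∀ᶠ x in atBot, A x * ((1 + (B x / A x) ^ δ) ^ (1/δ) - 1)
      + (1 - 1/δ) * Real.log (1 + (B x / A x) ^ δ) = L := by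
    filter_upwards [Phi_mem] with x hx
    exact copula_log hδ hα.1 hx (hq_mem _ hx) (hq _ hx)
  -- A → ∞ with A ~ x²/2
  have hAratio : Tendsto (fun x => A x / (x ^ 2 / 2)) atBot (𝓝 1) := neg_log_Phi
  have hA_top : Tendsto A atBot atTop := by
    have h1 := hAratio.pos_mul_atTop one_pos halfsq_tendsto
    refine Tendsto.congr' ?_ h1
    filter_upwards [eventually_le_atBot (-1 : ℝ)] with x hx
    have : x ^ 2 / 2 ≠ 0 := by nlinarith
    rw [div_mul_cancel₀ _ this]
  -- the copula asymptotics
  have hB : Tendsto (fun x => B x / ((δ * L) ^ (1/δ) * (A x) ^ (1 - 1/δ))) atBot (𝓝 1) :=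
    copula_asym hδ hL hApos hBpos hE hA_top
  -- B → ∞
  have hB_top : Tendsto B atBot atTop := by
    have hpow : Tendsto (fun x => (A x) ^ (1 - 1/δ)) atBot atTop :=
      (tendsto_rpow_atTop hη).comp hA_top
    have hden : Tendsto (fun x => (δ * L) ^ (1/δ) * (A x) ^ (1 - 1/δ)) atBot atTop :=
      hpow.const_mul_atTop (Real.rpow_pos_of_pos (by positivity) _)
    have h2 := hB.pos_mul_atTop one_pos hden
    refine Tendsto.congr' ?_ h2
    filter_upwards [hApos] with x hax
    have h3 : (δ * L) ^ (1/δ) * (A x) ^ (1 - 1/δ) ≠ 0 :=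
      (mul_pos (Real.rpow_pos_of_pos (by positivity) _) (Real.rpow_pos_of_pos hax _)).ne'
    field_simp
  -- Φ(Qy x) → 0, hence Qy → -∞
  have hPhiQy0 : Tendsto (fun x => stdNormalCDF (Qy x)) atBot (𝓝 0) := by
    have h1 : Tendsto (fun x => Real.exp (-B x)) atBot (𝓝 0) :=
      Real.tendsto_exp_atBot.comp (tendsto_neg_atTop_atBot.comp hB_top)
    refine Tendsto.congr' ?_ h1
    filter_upwards with x
    rw [hBQy x, neg_neg, Real.exp_log (Phi_pos _)]
  have hQy_bot : Tendsto Qy atBot atBot := by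
    rw [tendsto_atBot]
    intro M
    filter_upwards [hPhiQy0.eventually_lt_const (Phi_pos M)] with x hx
    by_contra h
    push_neg at h
    exact absurd (Phi_mono h.le) (not_le.2 hx)
  -- -log Φ(Qy) ~ Qy²/2
  have hQyRatio : Tendsto (fun x => B x / (Qy x ^ 2 / 2)) atBot (𝓝 1) := by
    have h1 := neg_log_Phi.comp hQy_bot
    refine Tendsto.congr' ?_ h1
    filter_upwards with x
    simp only [Function.comp, hBQy x]
  -- the three factors
  have P1 : Tendsto (fun x => Qy x ^ 2 / (2 * B x)) atBot (𝓝 1) := by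
    have h1 := hQyRatio.inv₀ one_ne_zero
    rw [inv_one] at h1
    refine Tendsto.congr' ?_ h1
    filter_upwards with x
    rw [inv_div, div_div]
  have P3 : Tendsto (fun x => (A x / (x ^ 2 / 2)) ^ (1 - 1/δ)) atBot (𝓝 1) := by
    have h6 : ContinuousAt (fun y : ℝ => y ^ (1 - 1/δ)) 1 :=
      Real.continuousAt_rpow_const 1 _ (Or.inl one_ne_zero)
    have h7 := h6.tendsto.comp hAratio
    rw [Real.one_rpow] at h7
    exact h7
  have hprod := (P1.mul hB).mul P3
  rw [show (1:ℝ) * 1 * 1 = 1 by norm_num] at hprod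
  -- squared ratio tends to 1
  have hc2 : (-2 * δ * Real.log α) = 2 * δ * L := by rw [hLdef]; ring
  have hsq : Tendsto (fun x : ℝ =>
      (Qy x / (-((-2 * δ * Real.log α) ^ (1 / (2 * δ)) * |x| ^ (1 - 1 / δ)))) ^ 2)
      atBot (𝓝 1) := by
    refine Tendsto.congr' ?_ hprod
    filter_upwards [hApos, hBpos, eventually_le_atBot (-1 : ℝ),
      hQy_bot.eventually (eventually_le_atBot (-1 : ℝ))] with x hax hbx hx hqx
    have hxne : x ≠ 0 := by intro h; rw [h] at hx; norm_num at hx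
    have hx2 : (0:ℝ) < x ^ 2 / 2 := by positivity
    have hAη : (0:ℝ) < (A x) ^ (1 - 1/δ) := Real.rpow_pos_of_pos hax _
    have hxη : (0:ℝ) < (x ^ 2 / 2) ^ (1 - 1/δ) := Real.rpow_pos_of_pos hx2 _
    have hdL : (0:ℝ) < (δ * L) ^ (1/δ) := Real.rpow_pos_of_pos (by positivity) _
    rw [hc2, Real.div_rpow hax.le hx2.le, div_pow,
      (even_two).neg_pow, const_identity hδ hL hxne]
    field_simp
  -- take square roots
  have hR0 : ∀ᶠ x in atBot,
      0 ≤ Qy x / (-((-2 * δ * Real.log α) ^ (1 / (2 * δ)) * |x| ^ (1 - 1 / δ))) := by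
    filter_upwards [eventually_le_atBot (-1 : ℝ),
      hQy_bot.eventually (eventually_le_atBot (-1 : ℝ))] with x hx hqx
    have hxne : x ≠ 0 := by intro h; rw [h] at hx; norm_num at hx
    have hcpos : (0:ℝ) < (-2 * δ * Real.log α) ^ (1 / (2 * δ)) * |x| ^ (1 - 1 / δ) := by
      rw [hc2]
      exact mul_pos (Real.rpow_pos_of_pos (by positivity) _)
        (Real.rpow_pos_of_pos (abs_pos.2 hxne) _)
    exact div_nonneg_iff.2 (Or.inr ⟨by linarith, by linarith⟩)
  have hsqrt := (Real.continuous_sqrt.tendsto 1).comp hsq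
  rw [Real.sqrt_one] at hsqrt
  refine Tendsto.congr' ?_ hsqrt
  filter_upwards [hR0] with x hx
  simp only [Function.comp]
  rw [Real.sqrt_sq hx]
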